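/- Let X be a finite set and let i, r : X → X be involutions, and let m be the number of ir classes of X. Then the number of alternating functions s : X → Bool is exactly 2^m. -/

import Mathlib

/-- The relation generated by introduction/removal partners: `a` is related to `b`
if `b` is the `i`-partner or the `r`-partner of `a`. -/
def irRel {X : Type*} (i r : X → X) : X → X → Prop :=
  fun a b => i a = b ∨ r a = b

/-- The ir class of `x`: the equivalence class of `x` under the equivalence relation
generated by `x ∼ i x` and `x ∼ r x`. -/
def irClass {X : Type*} (i r : X → X) (x : X) : Set X :=
  {y | Relation.EqvGen (irRel i r) x y}

/-- A sign assignment `s : X → Bool` is alternating (with respect to the involutions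
`i` and `r`) if partners that are distinct receive different signs. -/
def IsAlternating {X : Type*} (i r : X → X) (s : X → Bool) : Prop :=
  ∀ x : X, (i x ≠ x → s (i x) ≠ s x) ∧ (r x ≠ x → s (r x) ≠ s x)

open Classical in
/-- Lift of a map to the double cover `X × Bool`, flipping the sign whenever the
point is actually moved. -/
noncomputable def itil {X : Type*} (g : X → X) (p : X × Bool) : X × Bool :=
  (g p.1, if g p.1 = p.1 then p.2 else !p.2)

section Aux

variable {X : Type*} {i r : X → X}

lemma itil_invol {g : X → X} (hg : Function.Involutive g) :
    Function.Involutive (itil g) := by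
  intro p
  have h1 : g (g p.1) = p.1 := hg p.1
  by_cases h : g p.1 = p.1
  · simp [itil, h, h1]
  · have h2 : ¬(p.1 = g p.1) := fun hh => h hh.symm
    simp [itil, h, h1, h2]

lemma step_symm (hi : Function.Involutive i) (hr : Function.Involutive r) :
    Symmetric (irRel (itil i) (itil r)) := by
  intro a b h
  rcases h with h | h
  · exact Or.inl (by rw [← h]; exact itil_invol hi a)
  · exact Or.inr (by rw [← h]; exact itil_invol hr a)

/-- The key parity lemma: along any chain of double-cover steps which returns to the
same base point, the sign returns to the same value. -/
lemma chain_parity (hi : Function.Involutive i) (hr : Function.Involutive r) :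
    ∀ n : ℕ, ∀ p : ℕ → X × Bool,
      (∀ j, j < n → irRel (itil i) (itil r) (p j) (p (j + 1))) →
      (p 0).1 = (p n).1 → (p 0).2 = (p n).2 := by
  classical
  intro n
  induction n using Nat.strong_induction_on with
  | _ n IH =>
  intro p hp hfst
  -- shrink: a full coincidence in the chain lets us pass to a shorter chain
  have shrink : ∀ j k, 0 < k → j + k ≤ n → p j = p (j + k) → (p 0).2 = (p n).2 := by
    intro j k hk hjk hpe
    by_cases hkn : k = n
    · have hj0 : j = 0 := by omega
      rw [hj0] at hpe
      rw [show (0 : ℕ) + k = n from by omega] at hpe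
      rw [hpe]
    · -- k < n : build the shortened chain
      have hkltn : k < n := lt_of_le_of_ne (by omega) hkn
      set c : ℕ → X × Bool := fun t => if t ≤ j then p t else p (t + k) with hc
      have hcstep : ∀ t, t < n - k → irRel (itil i) (itil r) (c t) (c (t + 1)) := by
        intro t ht
        rcases lt_trichotomy t j with h | h | h
        · have h1 : t ≤ j := le_of_lt h
          have h2 : t + 1 ≤ j := h
          simp only [hc, if_pos h1, if_pos h2]
          exact hp t (by omega)
        · subst h
          have h2 : ¬(t + 1 ≤ t) := by omega
          simp only [hc, if_pos (le_refl t), if_neg h2]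
          rw [hpe]
          have := hp (t + k) (by omega)
          rw [show t + k + 1 = t + 1 + k from by omega] at this
          exact this
        · have h1 : ¬(t ≤ j) := by omega
          have h2 : ¬(t + 1 ≤ j) := by omega
          simp only [hc, if_neg h1, if_neg h2]
          have := hp (t + k) (by omega)
          rw [show t + k + 1 = t + 1 + k from by omega] at this
          exact this
      have hc0 : c 0 = p 0 := by simp only [hc, if_pos (Nat.zero_le j)]
      have hcend : c (n - k) = p n := by
        by_cases h : n - k ≤ j
        · have hj : n - k = j := by omega
          have hjkn : j + k = n := by omega
          simp only [hc, if_pos h, hj]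
          rw [hpe, hjkn]
          simp
        · simp only [hc, if_neg h]
          congr 1
          omega
      have := IH (n - k) (by omega) c hcstep (by rw [hc0, hcend]; exact hfst)
      rw [hc0, hcend] at this
      exact this
  rcases Nat.eq_zero_or_pos n with h0 | hpos
  · subst h0; rfl
  rcases eq_or_lt_of_le (show 1 ≤ n from hpos) with h1 | h2
  · -- n = 1
    have h1' : n = 1 := h1.symm
    subst h1'
    have hone : ∀ (g : X → X), itil g (p 0) = p 1 → (p 0).2 = (p 1).2 := by
      intro g h
      have hfix : g (p 0).1 = (p 0).1 := by
        have : (itil g (p 0)).1 = (p 1).1 := congrArg Prod.fst h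
        simpa [itil, ← hfst] using this
      rw [← h]
      simp [itil, hfix]
    rcases hp 0 (by omega) with h | h
    · exact hone i h
    · exact hone r h
  -- n ≥ 2
  by_cases hcol : ∃ j k, 0 < k ∧ j + k ≤ n ∧ p j = p (j + k)
  · obtain ⟨j, k, hk1, hk2, hk3⟩ := hcol
    exact shrink j k hk1 hk2 hk3
  push_neg at hcol
  have hstepflip : ∀ (g : X → X) (t : ℕ), t < n → itil g (p t) = p (t + 1) →
      (p (t + 1)).2 = !(p t).2 := by
    intro g t ht h
    by_cases hfix : g (p t).1 = (p t).1
    · exfalso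
      apply hcol t 1 one_pos (by omega)
      rw [← h]
      simp [itil, hfix]
    · rw [← h]
      simp [itil, hfix]
  have hflip : ∀ t, t < n → (p (t + 1)).2 = !(p t).2 := by
    intro t ht
    rcases hp t ht with h | h
    · exact hstepflip i t ht h
    · exact hstepflip r t ht h
  have hparity : ∀ t, t ≤ n → (p t).2 = (if t % 2 = 1 then !(p 0).2 else (p 0).2) := by
    intro t
    induction t with
    | zero => simp
    | succ v ihv =>
      intro hv
      rw [hflip v (by omega), ihv (by omega)]
      by_cases hv2 : v % 2 = 1
      · have : ¬((v + 1) % 2 = 1) := by omega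
        simp [hv2, this]
      · have : (v + 1) % 2 = 1 := by omega
        simp [hv2, this]
  by_cases hodd : n % 2 = 1
  swap
  · have := hparity n le_rfl
    simp [hodd] at this
    exact this.symm
  -- n odd, n ≥ 3 (n = 1 excluded since n ≥ 2 here)
  have hn3 : 3 ≤ n := by omega
  -- letters cannot repeat twice in a row
  have hAA : ∀ (g : X → X), Function.Involutive g → ∀ t, t + 2 ≤ n →
      itil g (p t) = p (t + 1) → itil g (p (t + 1)) = p (t + 2) → False := by
    intro g hg t ht h1 h2
    apply hcol t 2 (by omega) (by omega)
    rw [← h2, ← h1]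
    exact (itil_invol hg (p t)).symm
  have hAB : ∀ t, t < n → (itil i (p t) = p (t + 1)) ∨ (itil r (p t) = p (t + 1)) :=
    fun t ht => hp t ht
  have key2 : ∀ t, t + 3 ≤ n →
      ((itil i (p t) = p (t + 1)) → (itil i (p (t + 2)) = p (t + 3))) ∧
      ((itil r (p t) = p (t + 1)) → (itil r (p (t + 2)) = p (t + 3))) := by
    intro t ht
    constructor
    · intro hA
      have hnA1 : ¬(itil i (p (t + 1)) = p (t + 2)) := fun h => hAA i hi t (by omega) hA h
      have hB1 : itil r (p (t + 1)) = p (t + 2) := (hAB (t + 1) (by omega)).resolve_left hnA1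
      have hnB2 : ¬(itil r (p (t + 2)) = p (t + 3)) := by
        intro h
        exact hAA r hr (t + 1) (by omega) hB1 (by rw [show t + 1 + 2 = t + 3 from by omega]; exact h)
      have h5 := (hAB (t + 2) (by omega)).resolve_right hnB2
      rw [show t + 2 + 1 = t + 3 from by omega] at h5
      exact h5
    · intro hB
      have hnB1 : ¬(itil r (p (t + 1)) = p (t + 2)) := fun h => hAA r hr t (by omega) hB h
      have hA1 : itil i (p (t + 1)) = p (t + 2) := (hAB (t + 1) (by omega)).resolve_right hnB1
      have hnA2 : ¬(itil i (p (t + 2)) = p (t + 3)) := by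
        intro h
        exact hAA i hi (t + 1) (by omega) hA1 (by rw [show t + 1 + 2 = t + 3 from by omega]; exact h)
      have h5 := (hAB (t + 2) (by omega)).resolve_left hnA2
      rw [show t + 2 + 1 = t + 3 from by omega] at h5
      exact h5
  have keyA : ∀ u, 2 * u ≤ n - 1 →
      ((itil i (p 0) = p 1) → (itil i (p (2 * u)) = p (2 * u + 1))) ∧
      ((itil r (p 0) = p 1) → (itil r (p (2 * u)) = p (2 * u + 1))) := by
    intro u
    induction u with
    | zero => intro _; constructor <;> (intro h; simpa using h)
    | succ v ihv =>
      intro hv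
      have h2v : 2 * v ≤ n - 1 := by omega
      obtain ⟨ha, hb⟩ := ihv h2v
      have hk := key2 (2 * v) (by omega)
      constructor
      · intro h0
        have := hk.1 (ha h0)
        rw [show 2 * v + 2 = 2 * (v + 1) from by omega, show 2 * v + 3 = 2 * (v + 1) + 1 from by omega] at this
        exact this
      · intro h0
        have := hk.2 (hb h0)
        rw [show 2 * v + 2 = 2 * (v + 1) from by omega, show 2 * v + 3 = 2 * (v + 1) + 1 from by omega] at this
        exact this
  -- the main rotation argument
  have main : ∀ (g : X → X), Function.Involutive g →
      itil g (p 0) = p 1 → itil g (p (n - 1)) = p n → (p 0).2 = (p n).2 := by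
    intro g hg h1 h2
    have e2 : p (n - 1) = itil g (p n) := by
      rw [← h2]
      exact (itil_invol hg _).symm
    have hq : ∀ t, t < n - 2 → irRel (itil i) (itil r) (p (t + 1)) (p (t + 1 + 1)) :=
      fun t ht => hp (t + 1) (by omega)
    have hq1 : (p (0 + 1)).1 = (p ((n - 2) + 1)).1 := by
      have e1 : (p 1).1 = g (p 0).1 := by rw [← h1]; rfl
      have e3 : (p (n - 1)).1 = g (p n).1 := by rw [e2]; rfl
      rw [show (n - 2) + 1 = n - 1 from by omega, show (0 + 1 : ℕ) = 1 from rfl,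
        e1, e3, hfst]
    have hmid0 := IH (n - 2) (by omega) (fun t => p (t + 1)) hq hq1
    have hmid : (p (0 + 1)).2 = (p (n - 2 + 1)).2 := hmid0
    rw [show (0 + 1 : ℕ) = 1 from rfl, show (n - 2) + 1 = n - 1 from by omega] at hmid
    have e4 : (p 1).2 = (if g (p 0).1 = (p 0).1 then (p 0).2 else !(p 0).2) := by
      rw [← h1]; rfl
    have e5 : (p (n - 1)).2 = (if g (p n).1 = (p n).1 then (p n).2 else !(p n).2) := by
      rw [e2]; rfl
    rw [e4, e5, ← hfst] at hmid
    by_cases hfix : g (p 0).1 = (p 0).1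
    · rw [if_pos hfix, if_pos hfix] at hmid
      exact hmid
    · rw [if_neg hfix, if_neg hfix] at hmid
      exact Bool.not_inj hmid
  have hlast : n - 1 = 2 * ((n - 1) / 2) := by omega
  rcases hAB 0 (by omega) with h0 | h0
  · have hA := (keyA ((n - 1) / 2) (by omega)).1 h0
    rw [← hlast, show n - 1 + 1 = n from by omega] at hA
    exact main i hi h0 hA
  · have hB := (keyA ((n - 1) / 2) (by omega)).2 h0
    rw [← hlast, show n - 1 + 1 = n from by omega] at hB
    exact main r hr h0 hB


lemma eqvGen_to_chain (hi : Function.Involutive i) (hr : Function.Involutive r)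
    {u v : X × Bool} (h : Relation.EqvGen (irRel (itil i) (itil r)) u v) :
    ∃ (n : ℕ) (p : ℕ → X × Bool),
      (∀ j, j < n → irRel (itil i) (itil r) (p j) (p (j + 1))) ∧ p 0 = u ∧ p n = v := by
  have hrtg : Relation.ReflTransGen (irRel (itil i) (itil r)) u v := by
    induction h with
    | rel a b hab => exact Relation.ReflTransGen.single hab
    | refl a => exact Relation.ReflTransGen.refl
    | symm a b _ ih => exact (@Relation.ReflTransGen.stdSymm _ _ ⟨fun a b h => step_symm hi hr h⟩).symm _ _ ih
    | trans a b c _ _ ih1 ih2 => exact ih1.trans ih2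
  clear h
  induction hrtg with
  | refl => exact ⟨0, fun _ => u, fun j hj => absurd hj (Nat.not_lt_zero j), rfl, rfl⟩
  | @tail b c h1 hstep ih =>
    obtain ⟨n, p, hc, h0, hn⟩ := ih
    refine ⟨n + 1, fun t => if t = n + 1 then c else p t, ?_, ?_, ?_⟩
    · intro j hj
      have hj1 : ¬(j = n + 1) := by omega
      by_cases hj2 : j = n
      · subst hj2
        simp only [if_neg hj1, if_pos rfl]
        rw [hn]
        exact hstep
      · have hj3 : ¬(j + 1 = n + 1) := by omega
        simp only [if_neg hj1, if_neg hj3]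
        exact hc j (by omega)
    · simp only [if_neg (show ¬(0 = n + 1) from by omega)]
      exact h0
    · simp

lemma cover_uniq (hi : Function.Involutive i) (hr : Function.Involutive r) {u v : X × Bool}
    (h : Relation.EqvGen (irRel (itil i) (itil r)) u v) (hf : u.1 = v.1) : u.2 = v.2 := by
  obtain ⟨n, p, hc, h0, hn⟩ := eqvGen_to_chain hi hr h
  have := chain_parity hi hr n p hc (by rw [h0, hn]; exact hf)
  rw [h0, hn] at this
  exact this

/-- Negation on the double cover. -/
def negc {X : Type*} (p : X × Bool) : X × Bool := (p.1, !p.2)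

lemma itil_negc (g : X → X) (p : X × Bool) : itil g (negc p) = negc (itil g p) := by
  classical
  by_cases h : g p.1 = p.1 <;> simp [itil, negc, h]

lemma eqvGen_negc {u v : X × Bool}
    (h : Relation.EqvGen (irRel (itil i) (itil r)) u v) :
    Relation.EqvGen (irRel (itil i) (itil r)) (negc u) (negc v) := by
  induction h with
  | rel a b hab =>
    apply Relation.EqvGen.rel
    rcases hab with h | h
    · exact Or.inl (by rw [itil_negc, h])
    · exact Or.inr (by rw [itil_negc, h])
  | refl a => exact Relation.EqvGen.refl _
  | symm a b _ ih => exact Relation.EqvGen.symm _ _ ih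
  | trans a b c _ _ ih1 ih2 => exact Relation.EqvGen.trans _ _ _ ih1 ih2

lemma lift_chain {x y : X} (h : Relation.EqvGen (irRel i r) x y) :
    ∀ a, ∃ b, Relation.EqvGen (irRel (itil i) (itil r)) (x, a) (y, b) := by
  induction h with
  | rel x y hxy =>
    intro a
    rcases hxy with h | h
    · exact ⟨(itil i (x, a)).2, Relation.EqvGen.rel _ _ (Or.inl (by rw [← h]; rfl))⟩
    · exact ⟨(itil r (x, a)).2, Relation.EqvGen.rel _ _ (Or.inr (by rw [← h]; rfl))⟩
  | refl x => exact fun a => ⟨a, Relation.EqvGen.refl _⟩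
  | symm x y h ih =>
    intro a
    obtain ⟨b, hb⟩ := ih a
    by_cases hab : b = a
    · exact ⟨a, Relation.EqvGen.symm _ _ (hab ▸ hb)⟩
    · have hba : (!b) = a := by cases a <;> cases b <;> simp_all
      have h2 : Relation.EqvGen (irRel (itil i) (itil r)) (x, !a) (y, !b) := eqvGen_negc hb
      rw [hba] at h2
      exact ⟨!a, Relation.EqvGen.symm _ _ h2⟩
  | trans x y z h1 h2 ih1 ih2 =>
    intro a
    obtain ⟨b, hb⟩ := ih1 a
    obtain ⟨c, hc⟩ := ih2 b
    exact ⟨c, Relation.EqvGen.trans _ _ _ hb hc⟩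

lemma alt_inv {s : X → Bool} (hs : IsAlternating i r s) {u v : X × Bool}
    (h : Relation.EqvGen (irRel (itil i) (itil r)) u v) :
    Bool.xor (s u.1) u.2 = Bool.xor (s v.1) v.2 := by
  classical
  have key : ∀ (g : X → X), (∀ x, g x ≠ x → s (g x) ≠ s x) → ∀ w : X × Bool,
      Bool.xor (s w.1) w.2 = Bool.xor (s (itil g w).1) (itil g w).2 := by
    intro g hg w
    by_cases hfix : g w.1 = w.1
    · simp [itil, hfix]
    · have h1 := hg w.1 hfix
      have h2 : s (g w.1) = !(s w.1) := by
        cases hsy : s (g w.1) <;> cases hsx : s w.1 <;> simp_all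
      show Bool.xor (s w.1) w.2
          = Bool.xor (s (g w.1)) (if g w.1 = w.1 then w.2 else !w.2)
      rw [if_neg hfix, h2]
      cases s w.1 <;> cases w.2 <;> rfl
  induction h with
  | rel a b hab =>
    rcases hab with h | h
    · rw [← h]; exact key i (fun x => (hs x).1) a
    · rw [← h]; exact key r (fun x => (hs x).2) a
  | refl a => rfl
  | symm a b _ ih => exact ih.symm
  | trans a b c _ _ ih1 ih2 => exact ih1.trans ih2

variable (i r) in
/-- A canonical representative of the ir class of `y`. -/
noncomputable def repc (y : X) : X :=
  (Quotient.mk (Relation.EqvGen.setoid (irRel i r)) y).out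

lemma repc_rel (y : X) : Relation.EqvGen (irRel i r) (repc i r y) y :=
  Quotient.mk_out (s := Relation.EqvGen.setoid (irRel i r)) y

lemma repc_eq {x y : X} (h : Relation.EqvGen (irRel i r) x y) : repc i r x = repc i r y := by
  unfold repc
  congr 1
  exact Quotient.sound h

variable (i r) in
/-- The parity of `y` relative to the canonical representative of its class. -/
noncomputable def tfun (y : X) : Bool :=
  Classical.choose (lift_chain (repc_rel (i := i) (r := r) y) false)

lemma tfun_spec (y : X) :
    Relation.EqvGen (irRel (itil i) (itil r)) (repc i r y, false) (y, tfun i r y) :=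
  Classical.choose_spec (lift_chain (repc_rel (i := i) (r := r) y) false)

lemma tfun_uniq (hi : Function.Involutive i) (hr : Function.Involutive r) {y : X} {b : Bool}
    (h : Relation.EqvGen (irRel (itil i) (itil r)) (repc i r y, false) (y, b)) :
    b = tfun i r y := by
  have h2 := Relation.EqvGen.trans _ _ _
    (Relation.EqvGen.symm _ _ (tfun_spec (i := i) (r := r) y)) h
  exact (cover_uniq hi hr h2 rfl).symm

lemma tfun_step (hi : Function.Involutive i) (hr : Function.Involutive r) (g : X → X)
    (hgi : g = i ∨ g = r) (y : X) (hy : g y ≠ y) :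
    tfun i r (g y) = !(tfun i r y) := by
  classical
  have h1 : Relation.EqvGen (irRel i r) y (g y) := by
    rcases hgi with h | h <;> subst h
    · exact Relation.EqvGen.rel _ _ (Or.inl rfl)
    · exact Relation.EqvGen.rel _ _ (Or.inr rfl)
  have h3 : irRel (itil i) (itil r) (y, tfun i r y) (g y, !(tfun i r y)) := by
    have heq : itil g (y, tfun i r y) = (g y, !(tfun i r y)) := by
      show (g y, if g y = y then tfun i r y else !(tfun i r y)) = _
      rw [if_neg hy]
    rcases hgi with h | h <;> subst h
    · exact Or.inl heq
    · exact Or.inr heq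
  have h2 := tfun_spec (i := i) (r := r) y
  rw [repc_eq h1] at h2
  exact (tfun_uniq hi hr (Relation.EqvGen.trans _ _ _ h2
    (Relation.EqvGen.rel _ _ h3))).symm

lemma irClass_eq {x y : X} (h : Relation.EqvGen (irRel i r) x y) :
    irClass i r x = irClass i r y := by
  ext z
  simp only [irClass, Set.mem_setOf_eq]
  constructor
  · intro hz
    exact Relation.EqvGen.trans _ _ _ (Relation.EqvGen.symm _ _ h) hz
  · intro hz
    exact Relation.EqvGen.trans _ _ _ h hz

end Aux

/-- If `X` has exactly `m` ir classes, then there are exactly `2 ^ m` alternating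
functions `s : X → Bool`. -/
theorem card_alternating_eq_two_pow {X : Type*} [Fintype X] (i r : X → X)
    (hi : Function.Involutive i) (hr : Function.Involutive r)
    (m : ℕ) (hm : ({C : Set X | ∃ x, C = irClass i r x}).ncard = m) :
    Nat.card {s : X → Bool // IsAlternating i r s} = 2 ^ m := by
  classical
  subst hm
  set S := Relation.EqvGen.setoid (irRel i r) with hS
  have E : {s : X → Bool // IsAlternating i r s} ≃ (Quotient S → Bool) :=
    { toFun := fun s q => s.1 q.out
      invFun := fun f =>
        ⟨fun y => Bool.xor (tfun i r y) (f (Quotient.mk S y)), by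
          intro y
          constructor
          · intro hy
            show Bool.xor (tfun i r (i y)) (f (Quotient.mk S (i y)))
                ≠ Bool.xor (tfun i r y) (f (Quotient.mk S y))
            have hrel : Relation.EqvGen (irRel i r) y (i y) :=
              Relation.EqvGen.rel _ _ (Or.inl rfl)
            have hcl : Quotient.mk S (i y) = Quotient.mk S y :=
              (Quotient.sound hrel).symm
            rw [tfun_step hi hr i (Or.inl rfl) y hy, hcl]
            cases htf : tfun i r y <;> cases hf : f (Quotient.mk S y) <;> simp
          · intro hy
            show Bool.xor (tfun i r (r y)) (f (Quotient.mk S (r y)))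
                ≠ Bool.xor (tfun i r y) (f (Quotient.mk S y))
            have hrel : Relation.EqvGen (irRel i r) y (r y) :=
              Relation.EqvGen.rel _ _ (Or.inr rfl)
            have hcl : Quotient.mk S (r y) = Quotient.mk S y :=
              (Quotient.sound hrel).symm
            rw [tfun_step hi hr r (Or.inr rfl) y hy, hcl]
            cases htf : tfun i r y <;> cases hf : f (Quotient.mk S y) <;> simp⟩
      left_inv := by
        intro s
        apply Subtype.ext
        funext y
        have hinv := alt_inv s.2 (tfun_spec (i := i) (r := r) y)
        have hinv2 : Bool.xor (s.1 (repc i r y)) false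
            = Bool.xor (s.1 y) (tfun i r y) := hinv
        rw [Bool.xor_false] at hinv2
        show Bool.xor (tfun i r y) (s.1 (Quotient.mk S y).out) = s.1 y
        have hrep : (Quotient.mk S y).out = repc i r y := rfl
        rw [hrep, hinv2]
        cases htf : tfun i r y <;> cases hsy : s.1 y <;> rfl
      right_inv := by
        intro f
        funext q
        show Bool.xor (tfun i r q.out) (f (Quotient.mk S q.out)) = f q
        have h1 : Quotient.mk S q.out = q := Quotient.out_eq q
        have h2 : repc i r q.out = q.out := by
          unfold repc
          rw [Quotient.out_eq]
        have h3 : tfun i r q.out = false := by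
          refine (tfun_uniq hi hr ?_).symm
          rw [h2]
          exact Relation.EqvGen.refl _
        rw [h3, h1]
        cases f q <;> rfl }
  rw [Nat.card_congr E, Nat.card_fun]
  have hB : Nat.card Bool = 2 := by simp [Nat.card_eq_fintype_card]
  rw [hB]
  congr 1
  have e : Quotient S ≃ {C : Set X | ∃ x, C = irClass i r x} := by
    refine Equiv.ofBijective (fun q => ⟨irClass i r q.out, q.out, rfl⟩) ⟨?_, ?_⟩
    · intro q q' hqq
      have h4 : irClass i r q.out = irClass i r q'.out := congrArg Subtype.val hqq
      have h5 : Relation.EqvGen (irRel i r) q.out q'.out := by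
        have hm : q'.out ∈ irClass i r q'.out := Relation.EqvGen.refl _
        rw [← h4] at hm
        exact hm
      exact Quotient.out_equiv_out.mp h5
    · rintro ⟨C, x, hC⟩
      refine ⟨Quotient.mk S x, Subtype.ext ?_⟩
      show irClass i r (Quotient.mk S x).out = C
      rw [hC]
      exact irClass_eq (Quotient.mk_out (s := S) x)
  rw [Nat.card_congr e]
  exact Nat.card_coe_set_eq _
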